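/- Let G be a connected k-regular digraph with a normal adjacency matrix A on v vertices, and suppose there exist real a, b such that every eigenvalue θ ≠ k of A satisfies |θ − a| = b. Then A satisfies A·Aᵀ = (b² − a² + c)·I + (a + c)·(A + Aᵀ) + c·(J − I − A − Aᵀ), where c = ((k−a)² − b²)/v. -/

import Mathlib

open Matrix

/-- The v×v all-ones matrix over ℝ. -/
def allOnes (v : ℕ) : Matrix (Fin v) (Fin v) ℝ := Matrix.of fun _ _ => 1

lemma smul_cancel_vec {n : ℕ} {s t : ℂ} {z : Fin n → ℂ} (hz : z ≠ 0)
    (h : s • z = t • z) : s = t := by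
  have h2 : (s - t) • z = 0 := by rw [sub_smul, h, sub_self]
  rcases smul_eq_zero.mp h2 with h3 | h3
  · exact sub_eq_zero.mp h3
  · exact absurd h3 hz

lemma conj_eig_of_normal {n : ℕ} (B : Matrix (Fin n) (Fin n) ℂ)
    (hBH : Bᴴ = Bᵀ) (hnorm : B * Bᵀ = Bᵀ * B) {θ : ℂ} {z : Fin n → ℂ}
    (hz : B *ᵥ z = θ • z) : Bᵀ *ᵥ z = (starRingEnd ℂ θ) • z := by
  set w : Fin n → ℂ := Bᵀ *ᵥ z - (starRingEnd ℂ θ) • z with hw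
  have hsw : star w = star z ᵥ* B - θ • star z := by
    have hBTH : Bᵀᴴ = B := by rw [← hBH, conjTranspose_conjTranspose]
    rw [hw, star_sub, star_smul, star_mulVec, hBTH]
    simp
  have hS : star w ⬝ᵥ w = 0 := by
    rw [hsw, hw]
    simp only [sub_dotProduct, dotProduct_sub, smul_dotProduct, dotProduct_smul,
      smul_eq_mul]
    have t1 : (star z ᵥ* B) ⬝ᵥ (Bᵀ *ᵥ z) = θ * (star z ⬝ᵥ (Bᵀ *ᵥ z)) := by
      rw [← dotProduct_mulVec, mulVec_mulVec, hnorm, ← mulVec_mulVec, hz,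
        mulVec_smul, dotProduct_smul, smul_eq_mul]
    have t2 : (star z ᵥ* B) ⬝ᵥ z = θ * (star z ⬝ᵥ z) := by
      rw [← dotProduct_mulVec, hz, dotProduct_smul, smul_eq_mul]
    rw [t1, t2]
    ring
  have hw0 : w = 0 := by
    have hsum : ∑ i, Complex.normSq (w i) = 0 := by
      have : ((∑ i, Complex.normSq (w i) : ℝ) : ℂ) = star w ⬝ᵥ w := by
        rw [dotProduct]
        push_cast
        refine Finset.sum_congr rfl fun i _ => ?_
        simp [Pi.star_apply, ← Complex.normSq_eq_conj_mul_self]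
      rw [hS] at this
      exact_mod_cast this
    funext i
    have := (Finset.sum_eq_zero_iff_of_nonneg
      (fun i _ => Complex.normSq_nonneg (w i))).mp hsum i (Finset.mem_univ i)
    exact Complex.normSq_eq_zero.mp this
  rw [hw] at hw0
  exact sub_eq_zero.mp hw0

theorem stmt13 (v : ℕ) (k a b : ℝ) (A : Matrix (Fin v) (Fin v) ℝ)
    (h01 : ∀ i j, A i j = 0 ∨ A i j = 1) (hdiag : ∀ i, A i i = 0)
    (hreg : A * allOnes v = k • allOnes v ∧ allOnes v * A = k • allOnes v)
    (hnormal : A * Aᵀ = Aᵀ * A)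
    (hconn : ∀ x : Fin v → ℂ,
      (A.map (Complex.ofReal)).mulVec x = (k : ℂ) • x → ∀ i j, x i = x j)
    (heig : ∀ θ : ℂ, (∃ x : Fin v → ℂ, x ≠ 0 ∧
        (A.map (Complex.ofReal)).mulVec x = θ • x) →
      θ = (k : ℂ) ∨ ‖θ - (a : ℂ)‖ = b) :
    A * Aᵀ = (b ^ 2 - a ^ 2 + ((k - a) ^ 2 - b ^ 2) / v) •
        (1 : Matrix (Fin v) (Fin v) ℝ) +
      (a + ((k - a) ^ 2 - b ^ 2) / v) • (A + Aᵀ) +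
      (((k - a) ^ 2 - b ^ 2) / v) • (allOnes v - 1 - A - Aᵀ) := by
  rcases Nat.eq_zero_or_pos v with hv0 | hv
  · subst hv0; ext i j; exact i.elim0
  have hvR : (v : ℝ) ≠ 0 := Nat.cast_ne_zero.mpr hv.ne'
  set c : ℝ := ((k - a) ^ 2 - b ^ 2) / v with hc
  have hcv : c * v = (k - a) ^ 2 - b ^ 2 := by
    rw [hc]; field_simp
  -- row and column sums
  have i0 : Fin v := ⟨0, hv⟩
  have hrow : ∀ i, ∑ j, A i j = k := by
    intro i
    have := congrFun (congrFun hreg.1 i) i0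
    simpa [mul_apply, allOnes, Matrix.smul_apply] using this
  have hcol : ∀ j, ∑ l, A l j = k := by
    intro j
    have := congrFun (congrFun hreg.2 i0) j
    simpa [mul_apply, allOnes, Matrix.smul_apply] using this
  -- the matrix N we will show to be zero
  set N : Matrix (Fin v) (Fin v) ℝ :=
    A * Aᵀ - (b ^ 2 - a ^ 2) • (1 : Matrix (Fin v) (Fin v) ℝ)
      - a • A - a • Aᵀ - c • allOnes v with hNdef
  suffices hN0 : N = 0 by
    have key : A * Aᵀ = (b ^ 2 - a ^ 2) • (1 : Matrix (Fin v) (Fin v) ℝ)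
        + a • A + a • Aᵀ + c • allOnes v := by
      have h2 := hN0
      rw [hNdef, sub_sub, sub_sub, sub_sub, sub_eq_zero] at h2
      rw [h2]; abel
    rw [key]; module
  -- commutation of A with N
  have hAJ : A * allOnes v = allOnes v * A := hreg.1.trans hreg.2.symm
  have hAAA : A * (A * Aᵀ) = A * Aᵀ * A := by
    calc A * (A * Aᵀ) = A * (Aᵀ * A) := by rw [hnormal]
    _ = A * Aᵀ * A := by rw [← mul_assoc]
  have hcom : A * N = N * A := by
    rw [hNdef]
    simp only [mul_sub, sub_mul, Matrix.mul_smul, Matrix.smul_mul, mul_one, one_mul]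
    rw [hAAA, hAJ, hnormal]
  -- complexification
  set B : Matrix (Fin v) (Fin v) ℂ := A.map Complex.ofReal with hBdef
  set NC : Matrix (Fin v) (Fin v) ℂ := N.map Complex.ofReal with hNCdef
  set JC : Matrix (Fin v) (Fin v) ℂ := (allOnes v).map Complex.ofReal with hJCdef
  have hmapmul : ∀ X Y : Matrix (Fin v) (Fin v) ℝ,
      (X * Y).map Complex.ofReal = X.map Complex.ofReal * Y.map Complex.ofReal := by
    intro X Y
    ext i j
    simp only [Matrix.map_apply, Matrix.mul_apply]
    push_cast
    rfl
  have hBT : Aᵀ.map Complex.ofReal = Bᵀ := by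
    ext i j; simp [hBdef, Matrix.map_apply]
  have hBHerm : Bᴴ = Bᵀ := by
    ext i j
    simp [hBdef, conjTranspose_apply, Matrix.map_apply, Complex.conj_ofReal]
  have hBnormal : B * Bᵀ = Bᵀ * B := by
    rw [← hBT, hBdef, ← hmapmul, ← hmapmul, hnormal]
  have hBN : B * NC = NC * B := by
    rw [hBdef, hNCdef, ← hmapmul, ← hmapmul, hcom]
  have hNC : NC = B * Bᵀ - ((b : ℂ) ^ 2 - (a : ℂ) ^ 2) • 1 - (a : ℂ) • B
      - (a : ℂ) • Bᵀ - (c : ℂ) • JC := by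
    rw [hNCdef, hNdef]
    rw [← hBT, ← hmapmul]
    ext i j
    by_cases hij : i = j <;>
      simp only [Matrix.map_apply, Matrix.sub_apply, Matrix.smul_apply, one_apply, hij, hJCdef,
        hBdef, allOnes, of_apply, if_true, if_false, smul_eq_mul, mul_one,
        mul_zero, if_pos, ite_true, ite_false] <;>
      push_cast <;> ring
  -- N is symmetric, hence Hermitian over ℝ
  have hNsymm : Nᵀ = N := by
    rw [hNdef]
    simp only [transpose_sub, transpose_smul, transpose_mul, transpose_one,
      transpose_transpose]
    rw [show (allOnes v)ᵀ = allOnes v from rfl]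
    abel
  have hNH : N.IsHermitian := by
    show Nᴴ = N
    ext i j
    rw [conjTranspose_apply, star_trivial]
    exact congrFun (congrFun hNsymm j) i ▸ rfl
  -- every eigenvalue of N is zero
  have heval0 : ∀ i, hNH.eigenvalues i = 0 := by
    intro i
    set lam : ℝ := hNH.eigenvalues i with hlam
    have hy := hNH.mulVec_eigenvectorBasis i
    have hy0 : ⇑(hNH.eigenvectorBasis i) ≠ 0 := by
      intro h
      have hne := hNH.eigenvectorBasis.toBasis.ne_zero i
      rw [OrthonormalBasis.coe_toBasis] at hne
      exact hne ((WithLp.ofLp_eq_zero 2).mp h)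
    set x : Fin v → ℂ := fun j => ((hNH.eigenvectorBasis i j : ℝ) : ℂ) with hx
    have hx0 : x ≠ 0 := by
      intro h
      apply hy0
      funext j
      have := congrFun h j
      simpa [hx] using this
    have hxE : NC *ᵥ x = ((lam : ℝ) : ℂ) • x := by
      funext j
      have h1 := RingHom.map_mulVec Complex.ofRealHom N
        (⇑(hNH.eigenvectorBasis i)) j
      rw [hy] at h1
      simpa [hx, hlam, Complex.ofReal_mul, hNCdef, Function.comp_def,
        show (⇑Complex.ofRealHom : ℝ → ℂ) = Complex.ofReal from rfl] using h1.symm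
    -- the eigenspace of NC for lam is invariant under B
    set E := Module.End.eigenspace (Matrix.mulVecLin NC) ((lam : ℝ) : ℂ) with hE
    have hxmem : x ∈ E := by
      rw [hE, Module.End.mem_eigenspace_iff, Matrix.mulVecLin_apply]
      exact hxE
    haveI : Nontrivial E :=
      nontrivial_of_ne (⟨x, hxmem⟩ : E) 0 (fun h => hx0 (by simpa using h))
    have hstab : ∀ u ∈ E, (Matrix.mulVecLin B) u ∈ E := by
      intro u hu
      rw [hE, Module.End.mem_eigenspace_iff] at hu ⊢
      simp only [Matrix.mulVecLin_apply] at hu ⊢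
      rw [mulVec_mulVec, ← hBN, ← mulVec_mulVec, hu, mulVec_smul]
    obtain ⟨θ, hθ⟩ := Module.End.exists_eigenvalue
      ((Matrix.mulVecLin B).restrict hstab)
    obtain ⟨z', hz'⟩ := hθ.exists_hasEigenvector
    set z : Fin v → ℂ := (z' : Fin v → ℂ) with hz
    have hz0 : z ≠ 0 := fun h => hz'.2 (Subtype.ext h)
    have hzB : B *ᵥ z = θ • z := by
      have h1 := Module.End.mem_eigenspace_iff.mp hz'.1
      have h2 := congrArg (Subtype.val) h1
      simpa only [LinearMap.restrict_coe_apply, Matrix.mulVecLin_apply,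
        Submodule.coe_smul, hz] using h2
    have hzN : NC *ᵥ z = ((lam : ℝ) : ℂ) • z := by
      have h1 : (Matrix.mulVecLin NC) ↑z' = ((lam : ℝ) : ℂ) • ↑z' :=
        Module.End.mem_eigenspace_iff.mp z'.2
      simpa only [Matrix.mulVecLin_apply, hz] using h1
    -- case split on θ = k
    by_cases hk : θ = (k : ℂ)
    · -- θ = k : eigenvector is constant
      subst hk
      have hconst := hconn z hzB
      have hBTz : Bᵀ *ᵥ z = (k : ℂ) • z := by
        funext j
        simp only [mulVec, dotProduct, transpose_apply, hBdef, Matrix.map_apply,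
          Pi.smul_apply, smul_eq_mul]
        calc ∑ l, ((A l j : ℝ) : ℂ) * z l = ∑ l, ((A l j : ℝ) : ℂ) * z j := by
              exact Finset.sum_congr rfl fun l _ => by rw [hconst l j]
        _ = (∑ l, ((A l j : ℝ) : ℂ)) * z j := by rw [Finset.sum_mul]
        _ = (k : ℂ) * z j := by
              norm_cast
              rw [hcol j]
      have hJz : JC *ᵥ z = ((v : ℝ) : ℂ) • z := by
        funext j
        simp only [mulVec, dotProduct, hJCdef, Matrix.map_apply, allOnes, of_apply,
          Pi.smul_apply, smul_eq_mul]
        calc ∑ l, ((1 : ℝ) : ℂ) * z l = ∑ l : Fin v, z j := by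
              exact Finset.sum_congr rfl fun l _ => by rw [hconst l j]; simp
        _ = ((v : ℝ) : ℂ) * z j := by
              rw [Finset.sum_const, Finset.card_univ, Fintype.card_fin]
              push_cast
              ring
      have hcalc : NC *ᵥ z = ((k : ℂ) * (k : ℂ) + ((a : ℂ) ^ 2 - (b : ℂ) ^ 2)
          - (a : ℂ) * (k : ℂ) - (a : ℂ) * (k : ℂ) - (c : ℂ) * ((v : ℝ) : ℂ)) • z := by
        rw [hNC]
        simp only [sub_mulVec, add_mulVec, smul_mulVec, one_mulVec,
          ← mulVec_mulVec]
        rw [hBTz, mulVec_smul, hzB, hJz]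
        module
      have hs := smul_cancel_vec hz0 (hzN.symm.trans hcalc)
      have hcvC : (c : ℂ) * ((v : ℝ) : ℂ) = ((k : ℂ) - (a : ℂ)) ^ 2 - (b : ℂ) ^ 2 := by
        exact_mod_cast congrArg Complex.ofReal hcv
      have : ((lam : ℝ) : ℂ) = 0 := by rw [hs]; linear_combination -hcvC
      exact_mod_cast this
    · -- θ ≠ k
      have hb := (heig θ ⟨z, hz0, hzB⟩).resolve_left hk
      have hsum : ∑ j, z j = 0 := by
        have h1 : ∑ i1, (B *ᵥ z) i1 = (k : ℂ) * ∑ j, z j := by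
          simp only [mulVec, dotProduct, hBdef, Matrix.map_apply]
          rw [Finset.sum_comm]
          calc ∑ j, ∑ i1, ((A i1 j : ℝ) : ℂ) * z j
              = ∑ j, (k : ℂ) * z j := by
                refine Finset.sum_congr rfl fun j _ => ?_
                rw [← Finset.sum_mul]
                norm_cast
                rw [hcol j]
          _ = (k : ℂ) * ∑ j, z j := by rw [Finset.mul_sum]
        have h2 : ∑ i1, (B *ᵥ z) i1 = θ * ∑ j, z j := by
          rw [hzB]
          simp [Finset.mul_sum]
        have h3 : ((k : ℂ) - θ) * ∑ j, z j = 0 := by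
          rw [sub_mul, ← h1, ← h2, sub_self]
        rcases mul_eq_zero.mp h3 with h4 | h4
        · exact absurd (sub_eq_zero.mp h4).symm hk
        · exact h4
      have hBTz : Bᵀ *ᵥ z = (starRingEnd ℂ θ) • z :=
        conj_eig_of_normal B hBHerm hBnormal hzB
      have hJz : JC *ᵥ z = 0 := by
        funext j
        simp only [mulVec, dotProduct, hJCdef, Matrix.map_apply, allOnes, of_apply,
          Pi.zero_apply]
        simp only [Complex.ofReal_one, one_mul]
        exact hsum
      have hcalc : NC *ᵥ z = (θ * (starRingEnd ℂ θ) + ((a : ℂ) ^ 2 - (b : ℂ) ^ 2)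
          - (a : ℂ) * θ - (a : ℂ) * (starRingEnd ℂ θ)) • z := by
        rw [hNC]
        simp only [sub_mulVec, add_mulVec, smul_mulVec, one_mulVec,
          ← mulVec_mulVec]
        rw [hBTz, mulVec_smul, hzB, hJz]
        rw [smul_zero]
        module
      have hs := smul_cancel_vec hz0 (hzN.symm.trans hcalc)
      have h3 : (θ - (a : ℂ)) * (starRingEnd ℂ) (θ - (a : ℂ)) = ((b : ℂ)) ^ 2 := by
        rw [Complex.mul_conj]
        norm_cast
        rw [← Complex.sq_norm, hb]
      rw [map_sub, Complex.conj_ofReal] at h3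
      have : ((lam : ℝ) : ℂ) = 0 := by rw [hs]; linear_combination h3
      exact_mod_cast this
  -- conclude N = 0 by the spectral theorem
  have hst := hNH.spectral_theorem
  have hdiag0 : Matrix.diagonal (RCLike.ofReal ∘ hNH.eigenvalues)
      = (0 : Matrix (Fin v) (Fin v) ℝ) := by
    ext i j
    by_cases h : i = j <;> simp [Matrix.diagonal_apply, h, heval0]
  rw [hdiag0] at hst
  simpa using hst
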